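/- For an integer n ≥ 4 let I_n = ∫ from 1 to ∞ of ((1 - y^{-2})^{-1/(n-2)} - 1) dy. Then each I_n is a convergent improper integral, I_m < I_l whenever m > l ≥ 4, and I_n < 1 for every n ≥ 5. -/

import Mathlib

open MeasureTheory Set

namespace IAuxx

lemma rpow_neg_two {y : ℝ} (h : 0 < y) : y ^ (-2:ℝ) = (y^2)⁻¹ := by
  rw [show (-2:ℝ) = -((2:ℕ):ℝ) by norm_num, Real.rpow_neg h.le, Real.rpow_natCast]

lemma base_mem {y : ℝ} (hy : 1 < y) : 0 < 1 - y ^ (-2:ℝ) ∧ 1 - y ^ (-2:ℝ) < 1 := by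
  rw [rpow_neg_two (by linarith)]
  have h1 : (1:ℝ) < y^2 := by nlinarith
  have h2 : (0:ℝ) < y^2 := by nlinarith
  constructor
  · have : (y^2)⁻¹ < 1 := by rw [inv_lt_one_iff₀]; right; exact h1
    linarith
  · have : (0:ℝ) < (y^2)⁻¹ := by positivity
    linarith

/-- pointwise positivity of the integrand for negative exponent -/
lemma f_pos {y p : ℝ} (hy : 1 < y) (hp : p < 0) :
    0 < (1 - y ^ (-2:ℝ)) ^ p - 1 := by
  obtain ⟨hb0, hb1⟩ := base_mem hy
  have : 1 < (1 - y ^ (-2:ℝ)) ^ p :=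
    (Real.one_lt_rpow_iff_of_pos hb0).2 (Or.inr ⟨hb1, hp⟩)
  linarith

lemma f_strict {y p q : ℝ} (hy : 1 < y) (hpq : p < q) :
    (1 - y ^ (-2:ℝ)) ^ q - 1 < (1 - y ^ (-2:ℝ)) ^ p - 1 := by
  obtain ⟨hb0, hb1⟩ := base_mem hy
  have := Real.rpow_lt_rpow_of_exponent_gt hb0 hb1 hpq
  linarith

lemma f_contOn (p : ℝ) : ContinuousOn (fun y : ℝ => (1 - y ^ (-2:ℝ)) ^ p - 1) (Ioi 1) := by
  apply ContinuousOn.sub _ continuousOn_const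
  apply ContinuousOn.rpow_const
  · apply ContinuousOn.sub continuousOn_const
    intro y hy
    exact (Real.continuousAt_rpow_const y (-2)
      (Or.inl (by simp only [mem_Ioi] at hy; positivity))).continuousWithinAt
  · intro y hy
    exact Or.inl (ne_of_gt (base_mem hy).1)

/-- bound near 1 -/
lemma bound_near {y p : ℝ} (hy : 1 < y) (hy2 : y ≤ 2) (hp : -1/2 ≤ p) (hp0 : p < 0) :
    (1 - y ^ (-2:ℝ)) ^ p - 1 ≤ Real.sqrt 2 * (y - 1) ^ (-1/2 : ℝ) := by
  obtain ⟨hb0, hb1⟩ := base_mem hy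
  set b := 1 - y ^ (-2:ℝ) with hbdef
  have hyp : (0:ℝ) < y := by linarith
  have hbb : b = 1 - (y^2)⁻¹ := by rw [hbdef, rpow_neg_two hyp]
  have hyy : (0:ℝ) < y^2 := by positivity
  have hkey : (y - 1)/2 ≤ b := by
    rw [hbb]
    have hb2 : 1 - (y^2)⁻¹ = (y^2 - 1)/y^2 := by field_simp
    rw [hb2, div_le_div_iff₀ (by norm_num : (0:ℝ) < 2) hyy]
    nlinarith [mul_nonneg (sub_nonneg.2 hy.le) (sub_nonneg.2 hy2)]
  have h2 : (0:ℝ) < (y-1)/2 := by linarith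
  have step1 : b ^ p ≤ b ^ (-1/2 : ℝ) :=
    Real.rpow_le_rpow_of_exponent_ge hb0 hb1.le hp
  have step2 : b ^ (-1/2 : ℝ) ≤ ((y-1)/2) ^ (-1/2 : ℝ) :=
    Real.rpow_le_rpow_of_nonpos h2 hkey (by norm_num)
  have step3 : ((y-1)/2) ^ (-1/2 : ℝ) = Real.sqrt 2 * (y - 1) ^ (-1/2 : ℝ) := by
    rw [Real.div_rpow (by linarith) (by norm_num)]
    rw [show ((2:ℝ) ^ (-1/2 : ℝ)) = (Real.sqrt 2)⁻¹ by
      rw [Real.sqrt_eq_rpow, ← Real.rpow_neg (by norm_num)]; norm_num]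
    field_simp
  calc b ^ p - 1 ≤ b ^ p := by linarith
  _ ≤ ((y-1)/2) ^ (-1/2 : ℝ) := step1.trans step2
  _ = _ := step3

/-- bound at infinity -/
lemma bound_far {y p : ℝ} (hy : 2 ≤ y) (hp : -1/2 ≤ p) (hp0 : p < 0) :
    (1 - y ^ (-2:ℝ)) ^ p - 1 ≤ 2 * y ^ (-2:ℝ) := by
  have hy1 : (1:ℝ) < y := by linarith
  obtain ⟨hb0, hb1⟩ := base_mem hy1
  set u := y ^ (-2:ℝ) with hudef
  have hu : u = (y^2)⁻¹ := rpow_neg_two (by linarith)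
  have hu0 : 0 < u := by rw [hu]; positivity
  have hu4 : u ≤ 1/4 := by
    rw [hu]
    rw [show (1:ℝ)/4 = ((4:ℝ))⁻¹ by norm_num]
    apply inv_anti₀ (by norm_num)
    nlinarith
  have step1 : (1 - u) ^ p ≤ (1 - u) ^ (-1/2 : ℝ) :=
    Real.rpow_le_rpow_of_exponent_ge hb0 hb1.le hp
  have step2 : (1 - u) ^ (-1/2 : ℝ) ≤ 1 + 2*u := by
    have hpos : (0:ℝ) < 1 + 2*u := by linarith
    have hkey : ((1 + 2*u)⁻¹)^2 ≤ 1 - u := by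
      rw [← sub_nonneg]
      have h1 : ((1 + 2*u)⁻¹) * (1 + 2*u) = 1 := inv_mul_cancel₀ (ne_of_gt hpos)
      nlinarith [sq_nonneg ((1 + 2*u)⁻¹), inv_pos.2 hpos]
    have hsq : (1 + 2*u)⁻¹ ≤ Real.sqrt (1 - u) := by
      have := Real.sqrt_le_sqrt hkey
      rwa [Real.sqrt_sq (by positivity)] at this
    have hrw : (1 - u) ^ (-1/2 : ℝ) = (Real.sqrt (1 - u))⁻¹ := by
      rw [Real.sqrt_eq_rpow, ← Real.rpow_neg hb0.le]; norm_num
    rw [hrw]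
    have h01 : (0:ℝ) < (1 + 2*u)⁻¹ := by positivity
    calc (Real.sqrt (1 - u))⁻¹ ≤ ((1 + 2*u)⁻¹)⁻¹ := inv_anti₀ h01 hsq
    _ = 1 + 2*u := inv_inv _
  calc (1 - u) ^ p - 1 ≤ (1 + 2*u) - 1 := by linarith [step1.trans step2]
  _ = 2 * u := by ring

lemma intgP {p : ℝ} (hp : -1/2 ≤ p) (hp0 : p < 0) :
    IntegrableOn (fun y : ℝ => (1 - y ^ (-2:ℝ)) ^ p - 1) (Ioi 1) := by
  rw [← Ioc_union_Ioi_eq_Ioi (show (1:ℝ) ≤ 2 by norm_num), integrableOn_union]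
  constructor
  · -- Ioc 1 2
    have hg : IntegrableOn (fun y : ℝ => Real.sqrt 2 * (y - 1) ^ (-1/2 : ℝ)) (Ioc 1 2) := by
      have h1 : IntervalIntegrable (fun x : ℝ => x ^ (-1/2 : ℝ)) volume 0 1 :=
        intervalIntegral.intervalIntegrable_rpow' (by norm_num)
      have h2 := (h1.comp_sub_right 1).const_mul (Real.sqrt 2)
      rw [show (0:ℝ) + 1 = 1 by norm_num, show (1:ℝ) + 1 = 2 by norm_num] at h2
      exact (intervalIntegrable_iff_integrableOn_Ioc_of_le (by norm_num)).1 h2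
    refine hg.mono' (((f_contOn p).mono Ioc_subset_Ioi_self).aestronglyMeasurable
      measurableSet_Ioc) ?_
    rw [ae_restrict_iff' measurableSet_Ioc]
    refine ae_of_all _ fun y hy => ?_
    rw [Real.norm_of_nonneg (f_pos hy.1 hp0).le]
    exact bound_near hy.1 hy.2 hp hp0
  · -- Ioi 2
    have hg : IntegrableOn (fun y : ℝ => 2 * y ^ (-2:ℝ)) (Ioi 2) :=
      (integrableOn_Ioi_rpow_of_lt (by norm_num) (by norm_num)).const_mul 2
    refine hg.mono' (((f_contOn p).mono (Ioi_subset_Ioi (by norm_num))).aestronglyMeasurable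
      measurableSet_Ioi) ?_
    rw [ae_restrict_iff' measurableSet_Ioi]
    refine ae_of_all _ fun y hy => ?_
    rw [Real.norm_of_nonneg (f_pos (by simp only [mem_Ioi] at hy; linarith) hp0).le]
    exact bound_far (le_of_lt hy) hp hp0

lemma integral_lt {p q : ℝ} (hp : -1/2 ≤ p) (hq : -1/2 ≤ q) (hq0 : q < 0) (hpq : p < q) :
    (∫ y in Ioi (1:ℝ), ((1 - y ^ (-2:ℝ)) ^ q - 1)) <
      ∫ y in Ioi (1:ℝ), ((1 - y ^ (-2:ℝ)) ^ p - 1) := by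
  have hp0 : p < 0 := hpq.trans hq0
  have hip := intgP hp hp0
  have hiq := intgP hq hq0
  have hsub : IntegrableOn (fun y : ℝ =>
      ((1 - y ^ (-2:ℝ)) ^ p - 1) - ((1 - y ^ (-2:ℝ)) ^ q - 1)) (Ioi 1) := hip.sub hiq
  have key : 0 < ∫ y in Ioi (1:ℝ),
      (((1 - y ^ (-2:ℝ)) ^ p - 1) - ((1 - y ^ (-2:ℝ)) ^ q - 1)) := by
    rw [integral_pos_iff_support_of_nonneg_ae ?_ hsub]
    · refine lt_of_lt_of_le ?_ (measure_mono
        (show Ioc (1:ℝ) 2 ⊆ Function.support _ from fun y hy =>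
          ne_of_gt (sub_pos.2 (f_strict hy.1 hpq))))
      rw [Measure.restrict_apply measurableSet_Ioc,
        inter_eq_left.2 Ioc_subset_Ioi_self, Real.volume_Ioc]
      norm_num
    · rw [Filter.EventuallyLE, ae_restrict_iff' measurableSet_Ioi]
      refine ae_of_all _ fun y hy => ?_
      simp only [Pi.zero_apply]
      linarith [f_strict (show (1:ℝ) < y from hy) hpq]
  rwa [integral_sub hip hiq, sub_pos] at key

lemma I4_le : (∫ y in Ioi (1:ℝ), ((1 - y ^ (-2:ℝ)) ^ (-1/2 : ℝ) - 1)) ≤ 1 := by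
  have hint := intgP (le_refl (-1/2 : ℝ)) (by norm_num)
  have tends := intervalIntegral_tendsto_integral_Ioi 1 hint
    (Filter.tendsto_id (α := ℝ))
  refine le_of_tendsto tends ?_
  filter_upwards [Filter.eventually_ge_atTop (1:ℝ)] with T hT
  set F : ℝ → ℝ := fun y => Real.sqrt (y^2 - 1) - y with hF
  have hcont : ContinuousOn F (Icc 1 T) := by
    apply Continuous.continuousOn
    exact (Real.continuous_sqrt.comp (by continuity)).sub continuous_id
  have hderiv : ∀ x ∈ Ioo (1:ℝ) T,
      HasDerivWithinAt F ((1 - x ^ (-2:ℝ)) ^ (-1/2 : ℝ) - 1) (Ioi x) x := by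
    intro x hx
    have hx1 : (1:ℝ) < x := hx.1
    have hx0 : (0:ℝ) < x := by linarith
    have hne : x^2 - 1 ≠ 0 := by nlinarith
    have hpos : (0:ℝ) < x^2 - 1 := by nlinarith
    have h1 : HasDerivAt (fun y : ℝ => y^2 - 1) (2*x) x := by
      simpa using (hasDerivAt_pow 2 x).sub_const 1
    have h2 := (h1.sqrt hne).sub (hasDerivAt_id x)
    have heq : (2*x) / (2 * Real.sqrt (x^2 - 1)) - 1
        = (1 - x ^ (-2:ℝ)) ^ (-1/2 : ℝ) - 1 := by
      congr 1
      have hb : 1 - x ^ (-2:ℝ) = (x^2 - 1)/x^2 := by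
        rw [rpow_neg_two hx0]; field_simp
      rw [hb]
      have hs : Real.sqrt ((x^2-1)/x^2) = Real.sqrt (x^2-1) / x := by
        rw [Real.sqrt_div hpos.le, Real.sqrt_sq hx0.le]
      have hrw : ((x^2 - 1)/x^2) ^ (-1/2 : ℝ) = (Real.sqrt ((x^2-1)/x^2))⁻¹ := by
        rw [Real.sqrt_eq_rpow, ← Real.rpow_neg (by positivity)]; norm_num
      rw [hrw, hs]
      have hsp : (0:ℝ) < Real.sqrt (x^2 - 1) := Real.sqrt_pos.2 hpos
      field_simp
    rw [← heq]
    exact h2.hasDerivWithinAt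
  have hII : IntervalIntegrable (fun y : ℝ => (1 - y ^ (-2:ℝ)) ^ (-1/2 : ℝ) - 1)
      volume 1 T := by
    rw [intervalIntegrable_iff_integrableOn_Ioc_of_le hT]
    exact hint.mono_set Ioc_subset_Ioi_self
  have hFTC := intervalIntegral.integral_eq_sub_of_hasDeriv_right_of_le hT hcont hderiv hII
  simp only [id_eq]
  rw [hFTC, hF]
  simp only
  have h1 : Real.sqrt ((1:ℝ)^2 - 1) = 0 := by norm_num
  have h2 : Real.sqrt (T^2 - 1) ≤ T := by
    calc Real.sqrt (T^2 - 1) ≤ Real.sqrt (T^2) := Real.sqrt_le_sqrt (by linarith)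
    _ = T := Real.sqrt_sq (by linarith)
  rw [h1]
  linarith

end IAuxx

open IAuxx

/-- `I n = ∫₁^∞ ((1 - y⁻²)^{-1/(n-2)} - 1) dy`. -/
noncomputable def I (n : ℕ) : ℝ :=
  ∫ y in Set.Ioi (1 : ℝ), ((1 - y ^ (-2 : ℝ)) ^ (-(1 : ℝ) / ((n : ℝ) - 2)) - 1)

lemma exp_bounds {n : ℕ} (hn : 4 ≤ n) :
    -1/2 ≤ -(1:ℝ) / ((n : ℝ) - 2) ∧ -(1:ℝ) / ((n : ℝ) - 2) < 0 := by
  have h4 : (4:ℝ) ≤ (n:ℝ) := by exact_mod_cast hn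
  have h2 : (2:ℝ) ≤ (n:ℝ) - 2 := by linarith
  have h0 : (0:ℝ) < (n:ℝ) - 2 := by linarith
  constructor
  · rw [neg_div, neg_div, neg_le_neg_iff]
    exact one_div_le_one_div_of_le (by norm_num) h2
  · apply div_neg_of_neg_of_pos (by norm_num) h0

/-- For `n ≥ 4` the integral `I n` converges, `I` is strictly decreasing on `n ≥ 4`,
and `I n < 1` for `n ≥ 5`. -/
theorem I_integrable_strictAnti_lt_one :
    (∀ n : ℕ, 4 ≤ n →
      IntegrableOn (fun y : ℝ => (1 - y ^ (-2 : ℝ)) ^ (-(1 : ℝ) / ((n : ℝ) - 2)) - 1)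
        (Set.Ioi 1)) ∧
    (∀ m l : ℕ, 4 ≤ l → l < m → I m < I l) ∧
    (∀ n : ℕ, 5 ≤ n → I n < 1) := by
  have hanti : ∀ m l : ℕ, 4 ≤ l → l < m → I m < I l := by
    intro m l hl hlm
    obtain ⟨hl1, hl2⟩ := exp_bounds hl
    obtain ⟨hm1, hm2⟩ := exp_bounds (show 4 ≤ m by omega)
    have hcast : (l:ℝ) < (m:ℝ) := by exact_mod_cast hlm
    have h4 : (4:ℝ) ≤ (l:ℝ) := by exact_mod_cast hl
    have hexp : -(1:ℝ) / ((l : ℝ) - 2) < -(1:ℝ) / ((m : ℝ) - 2) := by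
      rw [neg_div, neg_div, neg_lt_neg_iff]
      apply one_div_lt_one_div_of_lt (by linarith) (by linarith)
    exact integral_lt hl1 hm1 hm2 hexp
  refine ⟨fun n hn => intgP (exp_bounds hn).1 (exp_bounds hn).2, hanti, ?_⟩
  intro n hn
  have h1 : I n < I 4 := hanti n 4 le_rfl (by omega)
  have h2 : I 4 ≤ 1 := by
    have : I 4 = ∫ y in Ioi (1:ℝ), ((1 - y ^ (-2:ℝ)) ^ (-1/2 : ℝ) - 1) := by
      unfold I
      norm_num
    rw [this]
    exact I4_le
  linarith
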